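/- (Game-theoretic Fatou's Lemma) Let (f_n) be a sequence of extended real variables on the path space Ω that is uniformly bounded below, and let f := liminf_n f_n (pointwise). If E_V(f) < +∞, then E_V(f) ≤ liminf_n E_V(f_n). -/

import Mathlib

open Filter

/-- prefix of length `n` of a path -/
def pref {X : Type*} (ω : ℕ → X) (n : ℕ) : List X := (List.range n).map ω

/-- process difference -/
def pdiff {X : Type*} (M : List X → ℝ) (s : List X) : X → ℝ := fun x => M (s ++ [x]) - M s

/-- process multiplier -/
noncomputable def pmul {X : Type*} (M : List X → ℝ) (s : List X) : X → ℝ :=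
  fun x => M (s ++ [x]) / M s

/-- family of coherent upper expectations (local models of an imprecise probability tree) -/
def Coherent {X : Type*} (Q : List X → (X → ℝ) → ℝ) : Prop :=
  ∀ s : List X,
    (∀ h : X → ℝ, Q s h ≤ ⨆ x, h x) ∧
    (∀ h g : X → ℝ, Q s (h + g) ≤ Q s h + Q s g) ∧
    (∀ (h : X → ℝ) (c : ℝ), 0 ≤ c → Q s (c • h) = c * Q s h)

/-- supermartingale for the tree with local models `Q` -/
def IsSupermart {X : Type*} (Q : List X → (X → ℝ) → ℝ) (M : List X → ℝ) : Prop :=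
  ∀ s : List X, Q s (pdiff M s) ≤ 0

/-- bounded below process -/
def BddBelowProc {X : Type*} (M : List X → ℝ) : Prop := ∃ C : ℝ, ∀ s : List X, C ≤ M s

/-- test supermartingale: nonnegative supermartingale with initial value 1 -/
def IsTestSupermart {X : Type*} (Q : List X → (X → ℝ) → ℝ) (M : List X → ℝ) : Prop :=
  IsSupermart Q M ∧ (∀ s : List X, 0 ≤ M s) ∧ M [] = 1

/-- game-theoretic upper expectation conditional on a situation `s` -/
noncomputable def EV {X : Type*} (Q : List X → (X → ℝ) → ℝ) (f : (ℕ → X) → EReal)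
    (s : List X) : EReal :=
  sInf { y : EReal | ∃ M : List X → ℝ, IsSupermart Q M ∧ BddBelowProc M ∧
    (∀ ω : ℕ → X, pref ω s.length = s →
      f ω ≤ Filter.liminf (fun n => ((M (pref ω n) : ℝ) : EReal)) Filter.atTop) ∧
    y = ((M s : ℝ) : EReal) }

set_option linter.unusedSectionVars false
section QBasic

variable {X : Type*} [Fintype X] [Nonempty X] {Q : List X → (X → ℝ) → ℝ}

lemma Q_le_of_le (hQ : Coherent Q) {s : List X} {h : X → ℝ} {c : ℝ}
    (hc : ∀ x, h x ≤ c) : Q s h ≤ c :=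
  le_trans ((hQ s).1 h) (ciSup_le hc)

lemma Q_zero (hQ : Coherent Q) (s : List X) : Q s (0 : X → ℝ) = 0 := by
  have := (hQ s).2.2 (0 : X → ℝ) 0 le_rfl
  simpa using this

lemma exists_le_Q (hQ : Coherent Q) (s : List X) (h : X → ℝ) : ∃ x, h x ≤ Q s h := by
  obtain ⟨x₀, hx₀⟩ := Finite.exists_min h
  refine ⟨x₀, ?_⟩
  have h1 : Q s (h + (-h)) ≤ Q s h + Q s (-h) := (hQ s).2.1 h (-h)
  have h2 : Q s (h + (-h)) = 0 := by
    have : h + (-h) = (0 : X → ℝ) := by funext x; simp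
    rw [this, Q_zero hQ]
  have h3 : Q s (-h) ≤ -h x₀ := Q_le_of_le hQ (fun x => by simpa using hx₀ x)
  linarith

lemma Q_const (hQ : Coherent Q) (s : List X) (c : ℝ) : Q s (fun _ => c) = c := by
  have h1 : Q s (fun _ => c) ≤ c := Q_le_of_le hQ (fun _ => le_rfl)
  obtain ⟨x, hx⟩ := exists_le_Q hQ s (fun _ => c)
  exact le_antisymm h1 hx

lemma Q_mono (hQ : Coherent Q) {s : List X} {h g : X → ℝ} (hle : ∀ x, h x ≤ g x) :
    Q s h ≤ Q s g := by
  have h1 : Q s (g + (h - g)) ≤ Q s g + Q s (h - g) := (hQ s).2.1 g (h - g)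
  have h2 : g + (h - g) = h := by funext x; simp
  have h3 : Q s (h - g) ≤ 0 := Q_le_of_le hQ (fun x => by simpa using hle x)
  rw [h2] at h1
  linarith

lemma Q_add_const (hQ : Coherent Q) (s : List X) (h : X → ℝ) (c : ℝ) :
    Q s (fun x => h x + c) = Q s h + c := by
  have h1 : Q s (fun x => h x + c) ≤ Q s h + c := by
    have := (hQ s).2.1 h (fun _ => c)
    have h2 : h + (fun _ => c) = fun x => h x + c := by funext x; simp
    rw [h2, Q_const hQ] at this
    exact this
  have h3 : Q s h ≤ Q s (fun x => h x + c) + (-c) := by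
    have := (hQ s).2.1 (fun x => h x + c) (fun _ => (-c))
    have h4 : (fun x => h x + c) + (fun _ => -c) = h := by funext x; simp
    rw [h4, Q_const hQ] at this
    linarith
  linarith

/-- If `h ≤ g + c` pointwise then `Q s h ≤ Q s g + c`. -/
lemma Q_le_add_const (hQ : Coherent Q) {s : List X} {h g : X → ℝ} {c : ℝ}
    (hle : ∀ x, h x ≤ g x + c) : Q s h ≤ Q s g + c := by
  have := Q_mono hQ (s := s) hle
  rwa [Q_add_const hQ] at this

lemma Q_smul (hQ : Coherent Q) (s : List X) (h : X → ℝ) {c : ℝ} (hc : 0 ≤ c) :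
    Q s (fun x => c * h x) = c * Q s h := by
  have := (hQ s).2.2 h c hc
  have h2 : c • h = fun x => c * h x := by funext x; simp
  rwa [h2] at this

end QBasic
set_option linter.unusedSectionVars false

section SmartBasic

variable {X : Type*} [Fintype X] [Nonempty X] {Q : List X → (X → ℝ) → ℝ}

lemma isSupermart_iff (hQ : Coherent Q) {M : List X → ℝ} :
    IsSupermart Q M ↔ ∀ s : List X, Q s (fun x => M (s ++ [x])) ≤ M s := by
  constructor
  · intro hM s
    have := hM s
    have h2 : Q s (pdiff M s) = Q s (fun x => M (s ++ [x])) - M s := by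
      have : pdiff M s = fun x => (fun y => M (s ++ [y])) x + (-(M s)) := by
        funext x; simp [pdiff]; ring
      rw [this, Q_add_const hQ]
      ring
    linarith [h2 ▸ this]
  · intro hM s
    have h2 : Q s (pdiff M s) = Q s (fun x => M (s ++ [x])) - M s := by
      have : pdiff M s = fun x => (fun y => M (s ++ [y])) x + (-(M s)) := by
        funext x; simp [pdiff]; ring
      rw [this, Q_add_const hQ]
      ring
    rw [h2]
    linarith [hM s]

lemma isSupermart_const (hQ : Coherent Q) (c : ℝ) : IsSupermart Q (fun _ => c) := by
  intro s
  have : pdiff (fun _ => c) s = (0 : X → ℝ) := by funext x; simp [pdiff]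
  rw [this, Q_zero hQ]

lemma isSupermart_add (hQ : Coherent Q) {M N : List X → ℝ}
    (hM : IsSupermart Q M) (hN : IsSupermart Q N) :
    IsSupermart Q (fun s => M s + N s) := by
  intro s
  have h1 : pdiff (fun s => M s + N s) s = fun x => pdiff M s x + pdiff N s x := by
    funext x; simp [pdiff]; ring
  rw [h1]
  calc Q s (fun x => pdiff M s x + pdiff N s x) ≤ Q s (pdiff M s) + Q s (pdiff N s) :=
        (hQ s).2.1 _ _
    _ ≤ 0 := by linarith [hM s, hN s]

lemma isSupermart_smul (hQ : Coherent Q) {M : List X → ℝ} {c : ℝ} (hc : 0 ≤ c)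
    (hM : IsSupermart Q M) : IsSupermart Q (fun s => c * M s) := by
  intro s
  have h1 : pdiff (fun s => c * M s) s = fun x => c * pdiff M s x := by
    funext x; simp [pdiff]; ring
  rw [h1, Q_smul hQ _ _ hc]
  have := hM s
  nlinarith

lemma isSupermart_sum (hQ : Coherent Q) {ι : Type*} (t : Finset ι)
    (c : ι → ℝ) (M : ι → List X → ℝ) (hc : ∀ i, 0 ≤ c i)
    (hM : ∀ i, IsSupermart Q (M i)) :
    IsSupermart Q (fun s => ∑ i ∈ t, c i * M i s) := by
  classical
  induction t using Finset.induction_on with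
  | empty => simpa using isSupermart_const hQ 0
  | insert _ _ hnotmem ih =>
    rename_i a t'
    have := isSupermart_add hQ (isSupermart_smul hQ (hc a) (hM a)) ih
    have heq : (fun s => c a * M a s + ∑ i ∈ t', c i * M i s)
        = fun s => ∑ i ∈ insert a t', c i * M i s := by
      funext s; rw [Finset.sum_insert hnotmem]
    rwa [heq] at this

/-- pointwise limit of supermartingales is a supermartingale -/
lemma isSupermart_of_tendsto (hQ : Coherent Q) {T : ℕ → List X → ℝ} {L : List X → ℝ}
    (hT : ∀ j, IsSupermart Q (T j))
    (htend : ∀ s, Filter.Tendsto (fun j => T j s) Filter.atTop (nhds (L s))) :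
    IsSupermart Q L := by
  intro s
  by_contra hcon
  push_neg at hcon
  set ε := Q s (pdiff L s) with hε
  have hεpos : 0 < ε := hcon
  -- find j with all values close
  have hkey : ∀ᶠ j in Filter.atTop, (∀ x : X, |L (s ++ [x]) - T j (s ++ [x])| ≤ ε / 4)
      ∧ |T j s - L s| ≤ ε / 4 := by
    have h1 : ∀ᶠ j in Filter.atTop, ∀ x : X, |L (s ++ [x]) - T j (s ++ [x])| ≤ ε / 4 := by
      rw [Filter.eventually_all]
      intro x
      have := (htend (s ++ [x])).eventually (Metric.closedBall_mem_nhds (L (s ++ [x]))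
        (by positivity : (0:ℝ) < ε / 4))
      filter_upwards [this] with j hj
      rw [Real.dist_eq] at hj
      rw [abs_sub_comm]; exact hj
    have h2 : ∀ᶠ j in Filter.atTop, |T j s - L s| ≤ ε / 4 := by
      have := (htend s).eventually (Metric.closedBall_mem_nhds (L s)
        (by positivity : (0:ℝ) < ε / 4))
      filter_upwards [this] with j hj
      rw [Real.dist_eq] at hj
      exact hj
    exact h1.and h2
  obtain ⟨j, hj1, hj2⟩ := hkey.exists
  have hle : ∀ x, pdiff L s x ≤ pdiff (T j) s x + ε / 2 := by
    intro x
    have := hj1 x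
    have h3 := abs_le.1 this
    have h4 := abs_le.1 hj2
    simp only [pdiff]
    cases h3; cases h4; linarith
  have := Q_le_add_const hQ (s := s) hle
  have := hT j s
  linarith

end SmartBasic
section PathLemmas

variable {X : Type*} [Fintype X] [Nonempty X] {Q : List X → (X → ℝ) → ℝ}

lemma pref_zero (ω : ℕ → X) : pref ω 0 = [] := by simp [pref]

lemma pref_length (ω : ℕ → X) (n : ℕ) : (pref ω n).length = n := by simp [pref]

lemma pref_succ (ω : ℕ → X) (n : ℕ) : pref ω (n + 1) = pref ω n ++ [ω n] := by
  simp [pref, List.range_succ]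

lemma pref_getElem (ω : ℕ → X) (n i : ℕ) (h : i < (pref ω n).length) :
    (pref ω n)[i] = ω i := by
  simp [pref]

lemma pref_eq_of_prefix {ω : ℕ → X} {t : List X} {n : ℕ} (h : t <+: pref ω n) :
    pref ω t.length = t := by
  apply List.ext_getElem
  · simp [pref_length]
  · intro i h1 h2
    rw [pref_getElem]
    have := h.getElem (by simpa [pref_length] using h2)
    rw [pref_getElem] at this
    exact this.symm

/-- From any node, a supermartingale admits a path along which it never increases. -/
lemma exists_descending_path (hQ : Coherent Q) {M : List X → ℝ} (hM : IsSupermart Q M)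
    (t : List X) :
    ∃ ω : ℕ → X, pref ω t.length = t ∧ ∀ n, t.length ≤ n → M (pref ω n) ≤ M t := by
  classical
  have hstep : ∀ s : List X, ∃ x : X, M (s ++ [x]) ≤ M s := by
    intro s
    obtain ⟨x, hx⟩ := exists_le_Q hQ s (pdiff M s)
    refine ⟨x, ?_⟩
    have := hM s
    have h2 : pdiff M s x = M (s ++ [x]) - M s := rfl
    linarith [h2 ▸ hx]
  let nx : List X → X := fun s => Classical.choose (hstep s)
  have hnx : ∀ s, M (s ++ [nx s]) ≤ M s := fun s => Classical.choose_spec (hstep s)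
  let chain : ℕ → List X := fun n => Nat.rec t (fun _ c => c ++ [nx c]) n
  have chain_zero : chain 0 = t := rfl
  have chain_succ : ∀ n, chain (n + 1) = chain n ++ [nx (chain n)] := fun n => rfl
  have chain_len : ∀ n, (chain n).length = t.length + n := by
    intro n
    induction n with
    | zero => rfl
    | succ n ih => rw [chain_succ, List.length_append, ih]; simp; ring
  let ω : ℕ → X := fun n => if h : n < t.length then t[n] else nx (chain (n - t.length))
  have hpref : ∀ n, pref ω (t.length + n) = chain n := by
    intro n
    induction n with
    | zero =>
      simp only [Nat.add_zero, chain_zero]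
      apply List.ext_getElem
      · simp [pref_length]
      · intro i h1 h2
        rw [pref_getElem]
        have hi : i < t.length := by simpa [pref_length] using h1
        simp only [ω, dif_pos hi]
    | succ n ih =>
      have : t.length + (n + 1) = (t.length + n) + 1 := by ring
      rw [this, pref_succ, ih, chain_succ]
      congr 1
      have hge : ¬ (t.length + n < t.length) := by omega
      simp only [ω, dif_neg hge]
      have harith : t.length + n - t.length = n := by omega
      rw [harith]
  have hdec : ∀ n, M (chain n) ≤ M t := by
    intro n
    induction n with
    | zero => exact le_of_eq (congrArg M chain_zero)
    | succ n ih => rw [chain_succ]; exact le_trans (hnx (chain n)) ih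
  refine ⟨ω, by simpa using (hpref 0).trans chain_zero, ?_⟩
  intro n hn
  have : n = t.length + (n - t.length) := by omega
  rw [this, hpref]
  exact hdec _

/-- Any supermartingale whose liminf dominates `g ≥ c` on all paths through `s`
is everywhere `≥ c` on the subtree of `s`. -/
lemma supermart_dom_lb (hQ : Coherent Q) {M : List X → ℝ} (hM : IsSupermart Q M)
    {g : (ℕ → X) → EReal} {s : List X} {c : ℝ}
    (hdom : ∀ ω : ℕ → X, pref ω s.length = s →
      g ω ≤ Filter.liminf (fun n => ((M (pref ω n) : ℝ) : EReal)) Filter.atTop)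
    (hg : ∀ ω : ℕ → X, pref ω s.length = s → (c : EReal) ≤ g ω) :
    ∀ t : List X, s <+: t → c ≤ M t := by
  intro t hst
  obtain ⟨ω, hω, hle⟩ := exists_descending_path hQ hM t
  have hs : pref ω s.length = s := by
    apply pref_eq_of_prefix (n := t.length)
    rw [hω]; exact hst
  have h1 : (c : EReal) ≤ Filter.liminf (fun n => ((M (pref ω n) : ℝ) : EReal)) Filter.atTop :=
    le_trans (hg ω hs) (hdom ω hs)
  have h2 : Filter.liminf (fun n => ((M (pref ω n) : ℝ) : EReal)) Filter.atTop
      ≤ ((M t : ℝ) : EReal) := by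
    apply Filter.liminf_le_of_frequently_le'
    apply Filter.Eventually.frequently
    filter_upwards [Filter.eventually_ge_atTop t.length] with n hn
    exact_mod_cast hle n hn
  exact_mod_cast le_trans h1 h2

end PathLemmas
section Canonical

variable {X : Type*} [Fintype X] [Nonempty X] {Q : List X → (X → ℝ) → ℝ}

/-- the defining set of the game-theoretic upper expectation -/
def EVSet (Q : List X → (X → ℝ) → ℝ) (g : (ℕ → X) → EReal) (s : List X) : Set EReal :=
  { y : EReal | ∃ M : List X → ℝ, IsSupermart Q M ∧ BddBelowProc M ∧
    (∀ ω : ℕ → X, pref ω s.length = s →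
      g ω ≤ Filter.liminf (fun n => ((M (pref ω n) : ℝ) : EReal)) Filter.atTop) ∧
    y = ((M s : ℝ) : EReal) }

lemma EV_eq_sInf (g : (ℕ → X) → EReal) (s : List X) : EV Q g s = sInf (EVSet Q g s) := rfl

lemma pref_cond_of_child {s : List X} {x : X} {ω : ℕ → X}
    (h : pref ω (s ++ [x]).length = s ++ [x]) : pref ω s.length = s := by
  apply pref_eq_of_prefix (n := (s ++ [x]).length)
  rw [h]
  exact ⟨[x], rfl⟩

lemma EVSet_child {g : (ℕ → X) → EReal} {s : List X} {M : List X → ℝ}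
    (hsup : IsSupermart Q M) (hbdd : BddBelowProc M)
    (hdom : ∀ ω : ℕ → X, pref ω s.length = s →
      g ω ≤ Filter.liminf (fun n => ((M (pref ω n) : ℝ) : EReal)) Filter.atTop) (x : X) :
    ((M (s ++ [x]) : ℝ) : EReal) ∈ EVSet Q g (s ++ [x]) :=
  ⟨M, hsup, hbdd, fun ω hω => hdom ω (pref_cond_of_child hω), rfl⟩

lemma EV_mono {g₁ g₂ : (ℕ → X) → EReal} (s : List X)
    (hle : ∀ ω : ℕ → X, g₁ ω ≤ g₂ ω) : EV Q g₁ s ≤ EV Q g₂ s := by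
  rw [EV_eq_sInf, EV_eq_sInf]
  apply sInf_le_sInf
  rintro y ⟨M, h1, h2, h3, h4⟩
  exact ⟨M, h1, h2, fun ω hω => le_trans (hle ω) (h3 ω hω), h4⟩

variable {g : (ℕ → X) → EReal} {c : ℝ}

lemma EV_lb (hQ : Coherent Q) (hgc : ∀ ω, (c : EReal) ≤ g ω) (s : List X) :
    (c : EReal) ≤ EV Q g s := by
  rw [EV_eq_sInf]
  apply le_sInf
  rintro y ⟨M, h1, _h2, h3, rfl⟩
  exact_mod_cast supermart_dom_lb hQ h1 h3 (fun ω _ => hgc ω) s (List.prefix_refl s)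

lemma EV_le_witness {W : List X → ℝ} (hWs : IsSupermart Q W) (hWb : BddBelowProc W)
    (hWd : ∀ ω : ℕ → X, g ω ≤ Filter.liminf (fun n => ((W (pref ω n) : ℝ) : EReal)) Filter.atTop)
    (s : List X) : EV Q g s ≤ ((W s : ℝ) : EReal) := by
  rw [EV_eq_sInf]
  exact sInf_le ⟨W, hWs, hWb, fun ω _ => hWd ω, rfl⟩

lemma EV_ne_bot (hQ : Coherent Q) (hgc : ∀ ω, (c : EReal) ≤ g ω) (s : List X) :
    EV Q g s ≠ ⊥ :=
  fun h => by simpa [h] using EV_lb hQ hgc s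

lemma EV_coe_toReal (hQ : Coherent Q) (hgc : ∀ ω, (c : EReal) ≤ g ω)
    {W : List X → ℝ} (hWs : IsSupermart Q W) (hWb : BddBelowProc W)
    (hWd : ∀ ω : ℕ → X, g ω ≤ Filter.liminf (fun n => ((W (pref ω n) : ℝ) : EReal)) Filter.atTop)
    (s : List X) : (((EV Q g s).toReal : ℝ) : EReal) = EV Q g s := by
  apply EReal.coe_toReal
  · exact ne_top_of_le_ne_top (EReal.coe_ne_top _) (EV_le_witness hWs hWb hWd s)
  · exact EV_ne_bot hQ hgc s

/-- The canonical process `s ↦ (EV Q g s).toReal` is a supermartingale. -/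
lemma canonical_supermart (hQ : Coherent Q) (hgc : ∀ ω, (c : EReal) ≤ g ω)
    {W : List X → ℝ} (hWs : IsSupermart Q W) (hWb : BddBelowProc W)
    (hWd : ∀ ω : ℕ → X, g ω ≤ Filter.liminf (fun n => ((W (pref ω n) : ℝ) : EReal)) Filter.atTop) :
    IsSupermart Q (fun s => (EV Q g s).toReal) := by
  intro s
  set V : List X → ℝ := fun t => (EV Q g t).toReal with hV
  have hcoe : ∀ t, ((V t : ℝ) : EReal) = EV Q g t := fun t => EV_coe_toReal hQ hgc hWs hWb hWd t
  have key : ∀ y ∈ EVSet Q g s, ((Q s (pdiff V s) + V s : ℝ) : EReal) ≤ y := by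
    rintro y ⟨M, h1, h2, h3, rfl⟩
    have hVle : ∀ x : X, V (s ++ [x]) ≤ M (s ++ [x]) := by
      intro x
      have hmem := EVSet_child (Q := Q) h1 h2 h3 x
      have hle : EV Q g (s ++ [x]) ≤ ((M (s ++ [x]) : ℝ) : EReal) := by
        rw [EV_eq_sInf]; exact sInf_le hmem
      rw [← hcoe (s ++ [x])] at hle
      exact_mod_cast hle
    have hQle : Q s (pdiff V s) ≤ M s - V s := by
      have hle : ∀ x, pdiff V s x ≤ pdiff M s x + (M s - V s) := by
        intro x
        simp only [pdiff]
        linarith [hVle x]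
      have := Q_le_add_const hQ (s := s) hle
      linarith [h1 s]
    have hr : Q s (pdiff V s) + V s ≤ M s := by linarith
    exact_mod_cast hr
  have h2 : ((Q s (pdiff V s) + V s : ℝ) : EReal) ≤ EV Q g s := by
    rw [EV_eq_sInf]; exact le_sInf key
  rw [← hcoe s] at h2
  have : Q s (pdiff V s) + V s ≤ V s := by exact_mod_cast h2
  linarith

/-- extraction of a near-optimal witness at a node -/
lemma exists_witness (hQ : Coherent Q) (hgc : ∀ ω, (c : EReal) ≤ g ω)
    {W : List X → ℝ} (hWs : IsSupermart Q W) (hWb : BddBelowProc W)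
    (hWd : ∀ ω : ℕ → X, g ω ≤ Filter.liminf (fun n => ((W (pref ω n) : ℝ) : EReal)) Filter.atTop)
    (s : List X) {θ : ℝ} (hθ : 0 < θ) :
    ∃ M : List X → ℝ, IsSupermart Q M ∧
      (∀ ω : ℕ → X, pref ω s.length = s →
        g ω ≤ Filter.liminf (fun n => ((M (pref ω n) : ℝ) : EReal)) Filter.atTop) ∧
      M s < (EV Q g s).toReal + θ := by
  have hlt : sInf (EVSet Q g s) < (((EV Q g s).toReal + θ : ℝ) : EReal) := by
    rw [← EV_eq_sInf]
    conv_lhs => rw [← EV_coe_toReal hQ hgc hWs hWb hWd s]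
    exact_mod_cast (by linarith : (EV Q g s).toReal < (EV Q g s).toReal + θ)
  rw [sInf_lt_iff] at hlt
  obtain ⟨y, ⟨M, h1, _h2, h3, rfl⟩, hy⟩ := hlt
  exact ⟨M, h1, h3, by exact_mod_cast hy⟩

end Canonical
section Relay

variable {X : Type*} [Fintype X] [Nonempty X] {Q : List X → (X → ℝ) → ℝ}

open Classical in
/-- one step of the relay betting strategy, deciding the state carried into the children
of node `s` -/
noncomputable def relayStep (A : List X → List X → ℝ) (trig : List X → Prop) (q : ℝ)
    (st : ℝ × Option (List X × ℝ)) (s : List X) : ℝ × Option (List X × ℝ) :=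
  match st with
  | (c, none) => if trig s then (c / 2, some (s, c / 2 / A s s)) else (c, none)
  | (c, some (b, u)) => if q ≤ A b s then (c + u * A b s, none) else (c, some (b, u))

noncomputable def relayGo (A : List X → List X → ℝ) (trig : List X → Prop) (q : ℝ) :
    ℝ × Option (List X × ℝ) → List X → List X → ℝ × Option (List X × ℝ)
  | st, _, [] => st
  | st, pr, x :: rest => relayGo A trig q (relayStep A trig q st pr) (pr ++ [x]) rest

/-- the state of the relay strategy at a node -/
noncomputable def relaySt (A : List X → List X → ℝ) (trig : List X → Prop) (q : ℝ)
    (s : List X) : ℝ × Option (List X × ℝ) :=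
  relayGo A trig q (1, none) [] s

/-- the capital process of the relay strategy -/
noncomputable def relayCap (A : List X → List X → ℝ) (trig : List X → Prop) (q : ℝ)
    (s : List X) : ℝ :=
  match relaySt A trig q s with
  | (c, none) => c
  | (c, some (b, u)) => c + u * A b s

/-- the cash floor of the relay strategy -/
noncomputable def relayFlr (A : List X → List X → ℝ) (trig : List X → Prop) (q : ℝ)
    (s : List X) : ℝ :=
  match relaySt A trig q s with
  | (c, none) => c
  | (_c, some _) => 2 * _c

lemma relayGo_append (A : List X → List X → ℝ) (trig : List X → Prop) (q : ℝ)
    (l : List X) : ∀ (st : ℝ × Option (List X × ℝ)) (pr : List X) (x : X),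
    relayGo A trig q st pr (l ++ [x]) = relayStep A trig q (relayGo A trig q st pr l) (pr ++ l) := by
  induction l with
  | nil => intro st pr x; simp [relayGo]
  | cons y l' ih =>
    intro st pr x
    show relayGo A trig q (relayStep A trig q st pr) (pr ++ [y]) (l' ++ [x]) = _
    rw [ih]
    simp [relayGo]

lemma relaySt_nil (A : List X → List X → ℝ) (trig : List X → Prop) (q : ℝ) :
    relaySt A trig q [] = (1, none) := rfl

lemma relaySt_snoc (A : List X → List X → ℝ) (trig : List X → Prop) (q : ℝ)
    (s : List X) (x : X) :
    relaySt A trig q (s ++ [x]) = relayStep A trig q (relaySt A trig q s) s := by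
  unfold relaySt
  rw [relayGo_append]
  simp

/-- invariant of the relay strategy state -/
def relayInv (A : List X → List X → ℝ) (p : ℝ) (s : List X)
    (st : ℝ × Option (List X × ℝ)) : Prop :=
  match st with
  | (c, none) => 0 ≤ c
  | (c, some (b, u)) => 0 ≤ c ∧ 0 ≤ u ∧ u * A b b = c ∧ A b b ≤ p ∧ b <+: s

lemma relay_inv (A : List X → List X → ℝ) (trig : List X → Prop) (q : ℝ) {p γ : ℝ}
    (hγ : 0 < γ)
    (hAp : ∀ b, trig b → A b b ≤ p)
    (hAγ : ∀ b t, b <+: t → γ ≤ A b t) :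
    ∀ s : List X, relayInv A p s (relaySt A trig q s) := by
  intro s
  induction s using List.reverseRecOn with
  | nil => rw [relaySt_nil]; exact zero_le_one
  | append_singleton s x ih =>
    rw [relaySt_snoc]
    rcases hst : relaySt A trig q s with ⟨c, st2⟩
    rcases st2 with _ | ⟨b, u⟩
    · rw [hst] at ih
      have hc : 0 ≤ c := ih
      by_cases ht : trig s
      · simp only [relayStep, if_pos ht]
        have hAss : 0 < A s s := lt_of_lt_of_le hγ (hAγ s s (List.prefix_refl s))
        refine ⟨by linarith, by positivity, ?_, hAp s ht, ⟨[x], rfl⟩⟩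
        field_simp
      · simp only [relayStep, if_neg ht]
        exact hc
    · rw [hst] at ih
      obtain ⟨hc, hu, huc, hbp, hbs⟩ := ih
      have hAbs : 0 < A b s := lt_of_lt_of_le hγ (hAγ b s hbs)
      by_cases hsell : q ≤ A b s
      · simp only [relayStep, if_pos hsell]
        show (0:ℝ) ≤ c + u * A b s
        have := mul_nonneg hu (le_of_lt hAbs)
        linarith
      · simp only [relayStep, if_neg hsell]
        exact ⟨hc, hu, huc, hbp, hbs.trans ⟨[x], rfl⟩⟩

lemma relayCap_eq_none {A : List X → List X → ℝ} {trig : List X → Prop} {q : ℝ}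
    {s : List X} {c : ℝ} (h : relaySt A trig q s = (c, none)) :
    relayCap A trig q s = c := by simp [relayCap, h]

lemma relayCap_eq_some {A : List X → List X → ℝ} {trig : List X → Prop} {q : ℝ}
    {s : List X} {c u : ℝ} {b : List X} (h : relaySt A trig q s = (c, some (b, u))) :
    relayCap A trig q s = c + u * A b s := by simp [relayCap, h]

lemma relayFlr_eq_none {A : List X → List X → ℝ} {trig : List X → Prop} {q : ℝ}
    {s : List X} {c : ℝ} (h : relaySt A trig q s = (c, none)) :
    relayFlr A trig q s = c := by simp [relayFlr, h]

lemma relayFlr_eq_some {A : List X → List X → ℝ} {trig : List X → Prop} {q : ℝ}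
    {s : List X} {c u : ℝ} {b : List X} (h : relaySt A trig q s = (c, some (b, u))) :
    relayFlr A trig q s = 2 * c := by simp [relayFlr, h]

lemma relay_supermart (hQ : Coherent Q) (A : List X → List X → ℝ) (trig : List X → Prop)
    {p q γ : ℝ} (hγ : 0 < γ)
    (hA : ∀ b, IsSupermart Q (A b))
    (hAp : ∀ b, trig b → A b b ≤ p)
    (hAγ : ∀ b t, b <+: t → γ ≤ A b t) :
    IsSupermart Q (relayCap A trig q) := by
  intro s
  rcases hst : relaySt A trig q s with ⟨c, st2⟩
  have hinv := relay_inv A trig q hγ hAp hAγ s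
  rw [hst] at hinv
  rcases st2 with _ | ⟨b, u⟩
  · by_cases ht : trig s
    · -- buy
      set u := c / 2 / A s s with hu
      have hchild : ∀ x : X, relaySt A trig q (s ++ [x]) = (c / 2, some (s, u)) := by
        intro x; rw [relaySt_snoc, hst]; simp only [relayStep, if_pos ht]; rfl
      have hAss : 0 < A s s := lt_of_lt_of_le hγ (hAγ s s (List.prefix_refl s))
      have huA : u * A s s = c / 2 := by rw [hu]; field_simp
      have hun : 0 ≤ u := by have : (0:ℝ) ≤ c := hinv; positivity
      have hd : pdiff (relayCap A trig q) s = fun x => u * pdiff (A s) s x := by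
        funext x
        rw [pdiff, relayCap_eq_some (hchild x), relayCap_eq_none hst, pdiff]
        linear_combination huA
      rw [hd, Q_smul hQ _ _ hun]
      exact mul_nonpos_of_nonneg_of_nonpos hun (hA s s)
    · have hchild : ∀ x : X, relaySt A trig q (s ++ [x]) = (c, none) := by
        intro x; rw [relaySt_snoc, hst]; simp only [relayStep, if_neg ht]
      have hd : pdiff (relayCap A trig q) s = (0 : X → ℝ) := by
        funext x
        rw [pdiff, relayCap_eq_none (hchild x), relayCap_eq_none hst]
        simp
      rw [hd, Q_zero hQ]
  · obtain ⟨hc, hu, huc, hbp, hbs⟩ := hinv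
    by_cases hsell : q ≤ A b s
    · have hchild : ∀ x : X, relaySt A trig q (s ++ [x]) = (c + u * A b s, none) := by
        intro x; rw [relaySt_snoc, hst]; simp only [relayStep, if_pos hsell]
      have hd : pdiff (relayCap A trig q) s = (0 : X → ℝ) := by
        funext x
        rw [pdiff, relayCap_eq_none (hchild x), relayCap_eq_some hst]
        simp
      rw [hd, Q_zero hQ]
    · have hchild : ∀ x : X, relaySt A trig q (s ++ [x]) = (c, some (b, u)) := by
        intro x; rw [relaySt_snoc, hst]; simp only [relayStep, if_neg hsell]
      have hd : pdiff (relayCap A trig q) s = fun x => u * pdiff (A b) s x := by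
        funext x
        rw [pdiff, relayCap_eq_some (hchild x), relayCap_eq_some hst, pdiff]
        ring
      rw [hd, Q_smul hQ _ _ hu]
      exact mul_nonpos_of_nonneg_of_nonpos hu (hA b s)

lemma relay_nonneg (A : List X → List X → ℝ) (trig : List X → Prop)
    {p q γ : ℝ} (hγ : 0 < γ)
    (hAp : ∀ b, trig b → A b b ≤ p)
    (hAγ : ∀ b t, b <+: t → γ ≤ A b t) :
    ∀ s, 0 ≤ relayCap A trig q s := by
  intro s
  have hinv := relay_inv A trig q hγ hAp hAγ s
  rcases hst : relaySt A trig q s with ⟨c, st2⟩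
  rw [hst] at hinv
  rcases st2 with _ | ⟨b, u⟩
  · rw [relayCap_eq_none hst]; exact hinv
  · obtain ⟨hc, hu, _, _, hbs⟩ := hinv
    rw [relayCap_eq_some hst]
    have h1 := hAγ b s hbs
    have h2 : 0 ≤ u * A b s := mul_nonneg hu (by linarith)
    linarith

lemma relay_init (A : List X → List X → ℝ) (trig : List X → Prop) (q : ℝ) :
    relayCap A trig q [] = 1 := relayCap_eq_none (relaySt_nil A trig q)

lemma relay_flr_le_cap (A : List X → List X → ℝ) (trig : List X → Prop)
    {p q γ : ℝ} (hγ : 0 < γ)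
    (hAp : ∀ b, trig b → A b b ≤ p)
    (hAγ : ∀ b t, b <+: t → γ ≤ A b t) :
    ∀ s, relayFlr A trig q s / 2 ≤ relayCap A trig q s := by
  intro s
  have hinv := relay_inv A trig q hγ hAp hAγ s
  rcases hst : relaySt A trig q s with ⟨c, st2⟩
  rw [hst] at hinv
  rcases st2 with _ | ⟨b, u⟩
  · have hc : (0:ℝ) ≤ c := hinv
    rw [relayCap_eq_none hst, relayFlr_eq_none hst]; linarith
  · obtain ⟨hc, hu, _, _, hbs⟩ := hinv
    rw [relayCap_eq_some hst, relayFlr_eq_some hst]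
    have h1 := hAγ b s hbs
    have h2 : 0 ≤ u * A b s := mul_nonneg hu (by linarith)
    linarith

lemma relay_flr_mono (A : List X → List X → ℝ) (trig : List X → Prop)
    {p q γ : ℝ} (hγ : 0 < γ) (hpq : p < q)
    (hAp : ∀ b, trig b → A b b ≤ p)
    (hAγ : ∀ b t, b <+: t → γ ≤ A b t) :
    ∀ (s : List X) (x : X), relayFlr A trig q s ≤ relayFlr A trig q (s ++ [x]) := by
  intro s x
  have hinv := relay_inv A trig q hγ hAp hAγ s
  rcases hst : relaySt A trig q s with ⟨c, st2⟩
  rw [hst] at hinv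
  rcases st2 with _ | ⟨b, u⟩
  · by_cases ht : trig s
    · have hchild : relaySt A trig q (s ++ [x]) = (c / 2, some (s, c / 2 / A s s)) := by
        rw [relaySt_snoc, hst]; simp only [relayStep, if_pos ht]
      rw [relayFlr_eq_none hst, relayFlr_eq_some hchild]
      linarith
    · have hchild : relaySt A trig q (s ++ [x]) = (c, none) := by
        rw [relaySt_snoc, hst]; simp only [relayStep, if_neg ht]
      rw [relayFlr_eq_none hst, relayFlr_eq_none hchild]
  · obtain ⟨hc, hu, huc, hbp, hbs⟩ := hinv
    by_cases hsell : q ≤ A b s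
    · have hchild : relaySt A trig q (s ++ [x]) = (c + u * A b s, none) := by
        rw [relaySt_snoc, hst]; simp only [relayStep, if_pos hsell]
      rw [relayFlr_eq_some hst, relayFlr_eq_none hchild]
      have h1 : u * A b b ≤ u * A b s := by
        apply mul_le_mul_of_nonneg_left _ hu
        linarith
      linarith
    · have hchild : relaySt A trig q (s ++ [x]) = (c, some (b, u)) := by
        rw [relaySt_snoc, hst]; simp only [relayStep, if_neg hsell]
      rw [relayFlr_eq_some hst, relayFlr_eq_some hchild]

lemma relay_flr_jump (A : List X → List X → ℝ) (trig : List X → Prop)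
    {p q γ : ℝ} (hγ : 0 < γ) (hp : 0 < p) (hpq : p < q)
    (hAp : ∀ b, trig b → A b b ≤ p)
    (hAγ : ∀ b t, b <+: t → γ ≤ A b t)
    {s : List X} {x : X} {c u : ℝ} {b : List X}
    (hst : relaySt A trig q s = (c, some (b, u))) (hsell : q ≤ A b s) :
    ((1 + q / p) / 2) * relayFlr A trig q s ≤ relayFlr A trig q (s ++ [x]) := by
  have hinv := relay_inv A trig q hγ hAp hAγ s
  rw [hst] at hinv
  obtain ⟨hc, hu, huc, hbp, hbs⟩ := hinv
  have hchild : relaySt A trig q (s ++ [x]) = (c + u * A b s, none) := by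
    rw [relaySt_snoc, hst]; simp only [relayStep, if_pos hsell]
  rw [relayFlr_eq_some hst, relayFlr_eq_none hchild]
  have hAbb : 0 < A b b := lt_of_lt_of_le hγ (hAγ b b (List.prefix_refl b))
  have hup : c / p ≤ u := by
    have h1 : c ≤ u * p := by
      calc c = u * A b b := huc.symm
      _ ≤ u * p := mul_le_mul_of_nonneg_left hbp hu
    exact (div_le_iff₀ hp).mpr h1
  have hq0 : 0 ≤ q := le_of_lt (hp.trans hpq)
  have h2 : (c / p) * q ≤ u * q := mul_le_mul_of_nonneg_right hup hq0
  have h3 : u * q ≤ u * A b s := mul_le_mul_of_nonneg_left hsell hu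
  have h4 : (1 + q / p) / 2 * (2 * c) = c + c / p * q := by ring
  linarith

end Relay
section RelayGrowth

variable {X : Type*} [Fintype X] [Nonempty X] {Q : List X → (X → ℝ) → ℝ}

lemma relay_growth (A : List X → List X → ℝ) (trig : List X → Prop)
    {p q γ : ℝ} (hγ : 0 < γ) (hp : 0 < p) (hpq : p < q)
    (hAp : ∀ b, trig b → A b b ≤ p)
    (hAγ : ∀ b t, b <+: t → γ ≤ A b t)
    (ω : ℕ → X)
    (Hfreq : ∀ N : ℕ, ∃ n, N ≤ n ∧ trig (pref ω n))
    (Hpay : ∀ m : ℕ, ∀ᶠ n in Filter.atTop, q ≤ A (pref ω m) (pref ω n)) :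
    ∀ r : ℝ, ∀ᶠ n in Filter.atTop, r ≤ relayCap A trig q (pref ω n) := by
  set κ : ℝ := (1 + q / p) / 2 with hκdef
  have hκ : 1 < κ := by
    have : 1 < q / p := (one_lt_div hp).mpr hpq
    rw [hκdef]; linarith
  have hκ0 : 0 < κ := by linarith
  set stN : ℕ → ℝ × Option (List X × ℝ) := fun n => relaySt A trig q (pref ω n) with hstN
  have hstep : ∀ n, relaySt A trig q (pref ω (n + 1))
      = relayStep A trig q (stN n) (pref ω n) := by
    intro n; rw [pref_succ, relaySt_snoc]
  set φ : ℕ → ℝ := fun n => relayFlr A trig q (pref ω n) with hφ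
  have hφmono : Monotone φ := by
    apply monotone_nat_of_le_succ
    intro n
    have := relay_flr_mono A trig hγ hpq hAp hAγ (pref ω n) (ω n)
    rw [← pref_succ] at this
    exact this
  have hφ0 : φ 0 = 1 := by
    have h0 : pref ω 0 = ([] : List X) := pref_zero ω
    show relayFlr A trig q (pref ω 0) = 1
    rw [h0]
    exact relayFlr_eq_none (relaySt_nil A trig q)
  -- a sell happens at time n
  set sellAt : ℕ → Prop := fun n => ∃ c u b, stN n = (c, some (b, u)) ∧ q ≤ A b (pref ω n)
    with hsellAt
  -- riding states eventually sell
  have claim1 : ∀ n c u b, stN n = (c, some (b, u)) → ∃ m, n ≤ m ∧ sellAt m := by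
    intro n c u b hride
    have hinv := relay_inv A trig q hγ hAp hAγ (pref ω n)
    rw [show relaySt A trig q (pref ω n) = stN n from rfl, hride] at hinv
    obtain ⟨_, _, _, _, hbs⟩ := hinv
    have hb : pref ω b.length = b := pref_eq_of_prefix hbs
    obtain ⟨T₀, hT₀⟩ := Filter.eventually_atTop.1 (Hpay b.length)
    by_contra hno
    push_neg at hno
    have hpersist : ∀ j, stN (n + j) = (c, some (b, u)) := by
      intro j
      induction j with
      | zero => simpa using hride
      | succ j ih =>
        have hnosell : ¬ q ≤ A b (pref ω (n + j)) := by
          intro hq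
          exact hno (n + j) (by omega) ⟨c, u, b, ih, hq⟩
        have h5 : stN (n + j + 1) = relayStep A trig q (stN (n + j)) (pref ω (n + j)) :=
          hstep (n + j)
        show stN (n + j + 1) = (c, some (b, u))
        rw [h5, ih]
        simp only [relayStep, if_neg hnosell]
    have hk : q ≤ A b (pref ω (n + T₀)) := by
      have := hT₀ (n + T₀) (by omega)
      rwa [hb] at this
    exact hno (n + T₀) (by omega) ⟨c, u, b, hpersist T₀, hk⟩
  -- sells happen infinitely often
  have claim2 : ∀ n, ∃ m, n ≤ m ∧ sellAt m := by
    intro n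
    by_contra hno
    push_neg at hno
    have hnone : ∀ k, n ≤ k → (stN k).2 = none := by
      intro k hk
      rcases hst2 : stN k with ⟨c, st2⟩
      rcases st2 with _ | ⟨b, u⟩
      · rfl
      · obtain ⟨m, hm1, hm2⟩ := claim1 k c u b hst2
        exact absurd hm2 (hno m (le_trans hk hm1))
    obtain ⟨k, hk1, hk2⟩ := Hfreq n
    rcases hst2 : stN k with ⟨c, st2⟩
    have h1 := hnone k hk1
    rw [hst2] at h1
    simp only at h1
    subst h1
    have h2 : stN (k + 1) = (c / 2, some (pref ω k, c / 2 / A (pref ω k) (pref ω k))) := by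
      rw [show stN (k+1) = relayStep A trig q (stN k) (pref ω k) from hstep k, hst2]
      simp only [relayStep, if_pos hk2]
    have h3 := hnone (k + 1) (by omega)
    rw [h2] at h3
    simp at h3
  -- the floor grows without bound
  have claim3 : ∀ i : ℕ, ∃ n, κ ^ i ≤ φ n := by
    intro i
    induction i with
    | zero => exact ⟨0, by rw [hφ0, pow_zero]⟩
    | succ i ih =>
      obtain ⟨n, hn⟩ := ih
      obtain ⟨m, hm1, ⟨c, u, b, hride, hsell⟩⟩ := claim2 n
      refine ⟨m + 1, ?_⟩
      have hjump := relay_flr_jump A trig hγ hp hpq hAp hAγ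
        (s := pref ω m) (x := ω m) hride hsell
      rw [← pref_succ] at hjump
      have h1 : κ ^ i ≤ φ m := le_trans hn (hφmono hm1)
      calc κ ^ (i + 1) = κ * κ ^ i := by ring
      _ ≤ κ * φ m := by
          apply mul_le_mul_of_nonneg_left h1 (le_of_lt hκ0)
      _ ≤ φ (m + 1) := hjump
  intro r
  obtain ⟨i, hi⟩ := pow_unbounded_of_one_lt (2 * r) hκ
  obtain ⟨n₀, hn₀⟩ := claim3 i
  rw [Filter.eventually_atTop]
  refine ⟨n₀, fun n hn => ?_⟩
  have h1 : κ ^ i ≤ φ n := le_trans hn₀ (hφmono hn)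
  have h2 := relay_flr_le_cap A trig (q := q) hγ hAp hAγ (pref ω n)
  show r ≤ relayCap A trig q (pref ω n)
  have : φ n / 2 ≤ relayCap A trig q (pref ω n) := h2
  linarith

end RelayGrowth
set_option maxHeartbeats 1000000
section Combine

variable {X : Type*} [Fintype X] [Nonempty X] {Q : List X → (X → ℝ) → ℝ}

lemma combine_insurance (hQ : Coherent Q) (Cs : ℕ → List X → ℝ)
    (hsup : ∀ i, IsSupermart Q (Cs i)) (hnn : ∀ i s, 0 ≤ Cs i s) (hinit : ∀ i, Cs i [] ≤ 1)
    {ε : ℝ} (hε : 0 < ε) :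
    ∃ J : List X → ℝ, IsSupermart Q J ∧ (∀ s, 0 ≤ J s) ∧ J [] ≤ ε ∧
      ∀ i, ∃ l : ℝ, 0 < l ∧ ∀ s, l * Cs i s ≤ J s := by
  classical
  letI : Encodable X := Encodable.ofEquiv _ (Fintype.equivFin X)
  letI : Encodable (List X) := List.encodable
  set enumNode : ℕ → List X := fun n => (Encodable.decode (α := List X) n).getD [] with henum
  have henc : ∀ s : List X, enumNode (Encodable.encode s) = s := by
    intro s; simp [henum, Encodable.encodek]
  set m : ℕ → ℝ := fun i => 1 + ∑ j ∈ Finset.range (i + 1), Cs i (enumNode j) with hm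
  have hm1 : ∀ i, 1 ≤ m i := by
    intro i
    have : 0 ≤ ∑ j ∈ Finset.range (i + 1), Cs i (enumNode j) :=
      Finset.sum_nonneg (fun j _ => hnn i _)
    simp only [hm]; linarith
  have hm0 : ∀ i, 0 < m i := fun i => lt_of_lt_of_le zero_lt_one (hm1 i)
  set lam : ℕ → ℝ := fun i => ε * (1 / 2) ^ (i + 1) / m i with hlam
  have hlam0 : ∀ i, 0 < lam i := by
    intro i
    apply div_pos _ (hm0 i)
    positivity
  have hkey : ∀ (i : ℕ) (s : List X), Encodable.encode s ≤ i →
      lam i * Cs i s ≤ ε * (1 / 2) ^ (i + 1) := by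
    intro i s hsi
    have h1 : Cs i s ≤ m i := by
      have h2 : Cs i s ≤ ∑ j ∈ Finset.range (i + 1), Cs i (enumNode j) := by
        have := Finset.single_le_sum (f := fun j => Cs i (enumNode j))
          (fun j _ => hnn i _) (Finset.mem_range.2 (by omega : Encodable.encode s < i + 1))
        simpa [henc s] using this
      simp only [hm]; linarith
    rw [hlam]
    rw [div_mul_eq_mul_div, div_le_iff₀ (hm0 i)]
    have h3 : 0 ≤ ε * (1/2:ℝ)^(i+1) := by positivity
    calc ε * (1 / 2) ^ (i + 1) * Cs i s ≤ ε * (1 / 2) ^ (i + 1) * m i :=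
      mul_le_mul_of_nonneg_left h1 h3
    _ = ε * (1 / 2) ^ (i + 1) * m i := rfl
  have hgeo : Summable (fun i : ℕ => ε * (1 / 2 : ℝ) ^ (i + 1)) := by
    apply Summable.congr ((summable_geometric_two).mul_left (ε / 2))
    intro i
    rw [pow_succ]
    ring
  have hsummable : ∀ s : List X, Summable (fun i => lam i * Cs i s) := by
    intro s
    rw [← summable_nat_add_iff (Encodable.encode s + 1)]
    refine Summable.of_nonneg_of_le (f := fun i => ε * (1 / 2 : ℝ) ^ (i + 1))
      (fun i => mul_nonneg (le_of_lt (hlam0 _)) (hnn _ _)) (fun i => ?_) hgeo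
    calc lam (i + (Encodable.encode s + 1)) * Cs (i + (Encodable.encode s + 1)) s
        ≤ ε * (1 / 2) ^ ((i + (Encodable.encode s + 1)) + 1) := hkey _ _ (by omega)
      _ ≤ ε * (1 / 2) ^ (i + 1) := by
          apply mul_le_mul_of_nonneg_left _ (le_of_lt hε)
          apply pow_le_pow_of_le_one (by norm_num) (by norm_num)
          omega
  set J : List X → ℝ := fun s => ∑' i, lam i * Cs i s with hJ
  refine ⟨J, ?_, ?_, ?_, ?_⟩
  · apply isSupermart_of_tendsto hQ
      (T := fun N s => ∑ i ∈ Finset.range N, lam i * Cs i s)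
    · intro N
      exact isSupermart_sum hQ (Finset.range N) lam Cs (fun i => le_of_lt (hlam0 i)) hsup
    · intro s
      exact (hsummable s).hasSum.tendsto_sum_nat
  · intro s
    exact tsum_nonneg (fun i => mul_nonneg (le_of_lt (hlam0 _)) (hnn _ _))
  · have h1 : ∀ i, lam i * Cs i [] ≤ ε * (1 / 2 : ℝ) ^ (i + 1) := by
      intro i
      have h2 : lam i * Cs i [] ≤ lam i * 1 :=
        mul_le_mul_of_nonneg_left (hinit i) (le_of_lt (hlam0 i))
      have h3 : lam i ≤ ε * (1 / 2 : ℝ) ^ (i + 1) := by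
        rw [hlam]
        rw [div_le_iff₀ (hm0 i)]
        have h4 : 0 ≤ ε * (1/2:ℝ)^(i+1) := by positivity
        have h5 := mul_le_mul_of_nonneg_left (hm1 i) h4
        linarith
      linarith
    have h5 : J [] ≤ ∑' i, ε * (1 / 2 : ℝ) ^ (i + 1) :=
      Summable.tsum_le_tsum h1 (hsummable []) hgeo
    have h6 : ∑' i, ε * (1 / 2 : ℝ) ^ (i + 1) = ε := by
      have h7 : ∀ i : ℕ, ε * (1 / 2 : ℝ) ^ (i + 1) = (ε / 2) * (1 / 2) ^ i := by
        intro i; rw [pow_succ]; ring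
      rw [tsum_congr h7, tsum_mul_left, tsum_geometric_two]
      ring
    linarith
  · intro i
    refine ⟨lam i, hlam0 i, fun s => ?_⟩
    exact Summable.le_tsum (hsummable s) i (fun j _ => mul_nonneg (le_of_lt (hlam0 _)) (hnn _ _))

end Combine
section Insurance

variable {X : Type*} [Fintype X] [Nonempty X] {Q : List X → (X → ℝ) → ℝ}

lemma insurance_exists (hQ : Coherent Q) (g : (ℕ → X) → EReal) {C : ℝ}
    (hgC : ∀ ω, (C : EReal) ≤ g ω)
    {W : List X → ℝ} (hWs : IsSupermart Q W) (hWb : BddBelowProc W)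
    (hWd : ∀ ω : ℕ → X, g ω ≤ Filter.liminf (fun n => ((W (pref ω n) : ℝ) : EReal)) Filter.atTop)
    (α β : ℝ) (hCα : C < α) (hαβ : α < β) :
    ∃ Cp : List X → ℝ, IsSupermart Q Cp ∧ (∀ s, 0 ≤ Cp s) ∧ Cp [] = 1 ∧
      (∀ ω : ℕ → X,
        (Filter.liminf (fun n => (((EV Q g (pref ω n)).toReal : ℝ) : EReal)) Filter.atTop
          < ((α : ℝ) : EReal)) →
        (((β : ℝ) : EReal) < g ω) →
        ∀ r : ℝ, ∀ᶠ n in Filter.atTop, r ≤ Cp (pref ω n)) := by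
  classical
  set θ : ℝ := (β - α) / 2 with hθdef
  have hθ : 0 < θ := by rw [hθdef]; linarith
  have hwit : ∀ b : List X, ∃ M : List X → ℝ, IsSupermart Q M ∧
      (∀ ω : ℕ → X, pref ω b.length = b →
        g ω ≤ Filter.liminf (fun n => ((M (pref ω n) : ℝ) : EReal)) Filter.atTop) ∧
      M b < (EV Q g b).toReal + θ :=
    fun b => exists_witness hQ hgC hWs hWb hWd b hθ
  set Mw : List X → List X → ℝ := fun b => Classical.choose (hwit b) with hMw
  have hMspec : ∀ b, IsSupermart Q (Mw b) ∧
      (∀ ω : ℕ → X, pref ω b.length = b →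
        g ω ≤ Filter.liminf (fun n => ((Mw b (pref ω n) : ℝ) : EReal)) Filter.atTop) ∧
      Mw b b < (EV Q g b).toReal + θ := fun b => Classical.choose_spec (hwit b)
  set A : List X → List X → ℝ := fun b t => Mw b t + (1 - C) with hA
  set trig : List X → Prop := fun s => (EV Q g s).toReal < α with htrig
  set p : ℝ := α + θ + (1 - C) with hpdef
  set q : ℝ := β + (1 - C) with hqdef
  have hp : 0 < p := by rw [hpdef]; linarith
  have hpq : p < q := by rw [hpdef, hqdef, hθdef]; linarith
  have hAsup : ∀ b, IsSupermart Q (A b) := by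
    intro b
    have := isSupermart_add hQ (hMspec b).1 (isSupermart_const hQ (1 - C))
    exact this
  have hAp : ∀ b, trig b → A b b ≤ p := by
    intro b hb
    have h1 := (hMspec b).2.2
    have h2 : (EV Q g b).toReal < α := hb
    show Mw b b + (1 - C) ≤ p
    rw [hpdef]; linarith
  have hAγ : ∀ b t, b <+: t → (1:ℝ) ≤ A b t := by
    intro b t hbt
    have h1 : C ≤ Mw b t :=
      supermart_dom_lb hQ (hMspec b).1 (hMspec b).2.1 (fun ω _ => hgC ω) t hbt
    show (1:ℝ) ≤ Mw b t + (1 - C)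
    linarith
  refine ⟨relayCap A trig q, relay_supermart hQ A trig (p := p) one_pos hAsup hAp hAγ,
    relay_nonneg A trig (q := q) (p := p) one_pos hAp hAγ, relay_init A trig q, ?_⟩
  intro ω hlim hβ r
  apply relay_growth A trig (p := p) one_pos hp hpq hAp hAγ ω
  · -- frequent triggers
    intro N
    have hfreq := Filter.frequently_lt_of_liminf_lt (by isBoundedDefault) hlim
    have h2 : ∃ᶠ n in Filter.atTop, trig (pref ω n) := by
      apply hfreq.mono
      intro n hn
      show (EV Q g (pref ω n)).toReal < α
      exact_mod_cast hn
    obtain ⟨n, hn1, hn2⟩ := (Filter.frequently_atTop.1 h2) N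
    exact ⟨n, hn1, hn2⟩
  · -- payoff
    intro m
    have hbm : pref ω (pref ω m).length = pref ω m := by rw [pref_length]
    have hdom := (hMspec (pref ω m)).2.1 ω hbm
    have h3 : ((β : ℝ) : EReal)
        < Filter.liminf (fun n => ((Mw (pref ω m) (pref ω n) : ℝ) : EReal)) Filter.atTop :=
      lt_of_lt_of_le hβ hdom
    have h4 := Filter.eventually_lt_of_lt_liminf h3
    apply h4.mono
    intro n hn
    have h5 : β < Mw (pref ω m) (pref ω n) := by exact_mod_cast hn
    show q ≤ Mw (pref ω m) (pref ω n) + (1 - C)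
    rw [hqdef]; linarith
end Insurance
theorem game_theoretic_fatou {X : Type*} [Fintype X] [Nonempty X]
    (Q : List X → (X → ℝ) → ℝ) (hQ : Coherent Q)
    (F : ℕ → (ℕ → X) → EReal)
    (hbdd : ∃ M : ℝ, ∀ n ω, (M : EReal) ≤ F n ω)
    (f : (ℕ → X) → EReal)
    (hf : f = fun ω => Filter.liminf (fun n => F n ω) Filter.atTop)
    (hfin : EV Q f [] < ⊤) :
    EV Q f [] ≤ Filter.liminf (fun n => EV Q (F n) []) Filter.atTop := by
  classical
  obtain ⟨C, hC⟩ := hbdd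
  set L : EReal := Filter.liminf (fun n => EV Q (F n) []) Filter.atTop with hLdef
  rcases eq_or_ne L ⊤ with hLtop | hLtop
  · rw [hLtop]; exact le_top
  -- the increasing ladder of infima
  set g : ℕ → (ℕ → X) → EReal := fun K ω => ⨅ n, ⨅ (_ : n ≥ K), F n ω with hgdef
  have hgC : ∀ K (ω : ℕ → X), (C : EReal) ≤ g K ω :=
    fun K ω => le_iInf fun n => le_iInf fun _ => hC n ω
  have hgF : ∀ K n, n ≥ K → ∀ ω : ℕ → X, g K ω ≤ F n ω := fun K n hn ω => iInf₂_le n hn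
  have hfsup : ∀ ω : ℕ → X, f ω = ⨆ K, g K ω := by
    intro ω
    rw [hf]
    exact Filter.liminf_eq_iSup_iInf_of_nat
  have hgf : ∀ K (ω : ℕ → X), g K ω ≤ f ω := by
    intro K ω; rw [hfsup]; exact le_iSup (fun K => g K ω) K
  -- global witness from hfin
  have hW0 : sInf (EVSet Q f []) < ⊤ := by rw [← EV_eq_sInf]; exact hfin
  rw [sInf_lt_iff] at hW0
  obtain ⟨y, ⟨W, hWs, hWb, hWd0, rfl⟩, -⟩ := hW0
  have hWd : ∀ ω : ℕ → X,
      f ω ≤ Filter.liminf (fun n => ((W (pref ω n) : ℝ) : EReal)) Filter.atTop :=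
    fun ω => hWd0 ω (pref_zero ω)
  have hWdg : ∀ K (ω : ℕ → X),
      g K ω ≤ Filter.liminf (fun n => ((W (pref ω n) : ℝ) : EReal)) Filter.atTop :=
    fun K ω => le_trans (hgf K ω) (hWd ω)
  -- canonical processes
  set V : ℕ → List X → ℝ := fun K s => (EV Q (g K) s).toReal with hVdef
  have hVcoe : ∀ K s, ((V K s : ℝ) : EReal) = EV Q (g K) s :=
    fun K s => EV_coe_toReal hQ (hgC K) hWs hWb (hWdg K) s
  have hVsup : ∀ K, IsSupermart Q (V K) :=
    fun K => canonical_supermart hQ (hgC K) hWs hWb (hWdg K)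
  have hVC : ∀ K s, C ≤ V K s := by
    intro K s
    have h1 := EV_lb hQ (hgC K) s
    rw [← hVcoe K s] at h1
    exact_mod_cast h1
  have hVW : ∀ K s, V K s ≤ W s := by
    intro K s
    have h1 := EV_le_witness (g := g K) hWs hWb (hWdg K) s
    rw [← hVcoe K s] at h1
    exact_mod_cast h1
  have hVmono : ∀ s, Monotone (fun K => V K s) := by
    intro s
    apply monotone_nat_of_le_succ
    intro K
    have h1 : EV Q (g K) s ≤ EV Q (g (K + 1)) s := by
      apply EV_mono
      intro ω
      exact le_iInf fun n => le_iInf fun hn => iInf₂_le n (by omega)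
    rw [← hVcoe K s, ← hVcoe (K + 1) s] at h1
    exact_mod_cast h1
  -- facts about L
  have hLC : (C : EReal) ≤ L := by
    rw [hLdef]
    refine Filter.le_liminf_of_le (by isBoundedDefault) ?_
    apply Filter.Eventually.of_forall
    intro n
    exact EV_lb hQ (fun ω => hC n ω) []
  have hLbot : L ≠ ⊥ := by
    intro h
    rw [h] at hLC
    exact (not_le.2 (EReal.bot_lt_coe C)) hLC
  set Lr : ℝ := L.toReal with hLrdef
  have hLrL : ((Lr : ℝ) : EReal) = L := EReal.coe_toReal hLtop hLbot
  have hVLr : ∀ K, V K [] ≤ Lr := by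
    intro K
    have h1 : EV Q (g K) [] ≤ ⨅ n, ⨅ (_ : n ≥ K), EV Q (F n) [] :=
      le_iInf fun n => le_iInf fun hn => EV_mono [] (hgF K n hn)
    have h2 : (⨅ n, ⨅ (_ : n ≥ K), EV Q (F n) []) ≤ L := by
      rw [hLdef, Filter.liminf_eq_iSup_iInf_of_nat]
      exact le_iSup (fun K => ⨅ n, ⨅ (_ : n ≥ K), EV Q (F n) []) K
    have h3 := le_trans h1 h2
    rw [← hVcoe K [], ← hLrL] at h3
    exact_mod_cast h3
  -- the increasing limit of the canonical processes
  have hbddV : ∀ s, BddAbove (Set.range fun K => V K s) := by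
    intro s
    refine ⟨W s, ?_⟩
    rintro y ⟨K, rfl⟩
    exact hVW K s
  set T' : List X → ℝ := fun s => ⨆ K, V K s with hT'def
  have hT'sup : IsSupermart Q T' := by
    apply isSupermart_of_tendsto hQ (T := V)
    · exact hVsup
    · intro s
      exact tendsto_atTop_ciSup (hVmono s) (hbddV s)
  have hT'V : ∀ K s, V K s ≤ T' s := fun K s => le_ciSup (hbddV s) K
  have hT'C : ∀ s, C ≤ T' s := fun s => le_trans (hVC 0 s) (hT'V 0 s)
  have hT'Lr : T' [] ≤ Lr := ciSup_le fun K => hVLr K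
  -- reduce to an ε-statement
  suffices hsuf : ∀ ε : ℝ, 0 < ε → EV Q f [] ≤ L + (ε : EReal) by
    by_contra hcon
    push_neg at hcon
    rw [← hLrL] at hcon
    obtain ⟨z, hz1, hz2⟩ := EReal.lt_iff_exists_real_btwn.1 hcon
    have hε : 0 < z - Lr := by
      have h1 : Lr < z := by exact_mod_cast hz1
      linarith
    have h2 := hsuf (z - Lr) hε
    rw [← hLrL, ← EReal.coe_add] at h2
    have h3 : Lr + (z - Lr) = z := by ring
    rw [h3] at h2
    exact absurd (lt_of_le_of_lt h2 hz2) (lt_irrefl _)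
  intro ε hε
  -- the insurance supermartingales
  have hins : ∀ (K : ℕ) (a b : ℚ), C < (a : ℝ) → (a : ℝ) < (b : ℝ) →
      ∃ Cp : List X → ℝ, IsSupermart Q Cp ∧ (∀ s, 0 ≤ Cp s) ∧ Cp [] = 1 ∧
      (∀ ω : ℕ → X,
        (Filter.liminf (fun n => (((EV Q (g K) (pref ω n)).toReal : ℝ) : EReal)) Filter.atTop
          < (((a : ℝ) : ℝ) : EReal)) →
        ((((b : ℝ) : ℝ) : EReal) < g K ω) →
        ∀ r : ℝ, ∀ᶠ n in Filter.atTop, r ≤ Cp (pref ω n)) :=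
    fun K a b h1 h2 => insurance_exists hQ (g K) (hgC K) hWs hWb (hWdg K) (a : ℝ) (b : ℝ) h1 h2
  set Cs : ℕ → List X → ℝ := fun i =>
    (Encodable.decode (α := ℕ × ℚ × ℚ) i).elim (fun _ => (1 : ℝ))
      (fun t => if hv : C < ((t.2.1 : ℚ) : ℝ) ∧ ((t.2.1 : ℚ) : ℝ) < ((t.2.2 : ℚ) : ℝ) then
          Classical.choose (hins t.1 t.2.1 t.2.2 hv.1 hv.2)
        else fun _ => 1) with hCsdef
  have hCs1 : ∀ i, IsSupermart Q (Cs i) := by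
    intro i
    rw [hCsdef]
    rcases hdi : Encodable.decode (α := ℕ × ℚ × ℚ) i with - | ⟨K, a, b⟩
    · simp only [hdi, Option.elim]
      exact isSupermart_const hQ 1
    · simp only [hdi, Option.elim]
      by_cases hv : C < ((a : ℚ) : ℝ) ∧ ((a : ℚ) : ℝ) < ((b : ℚ) : ℝ)
      · rw [dif_pos hv]
        exact (Classical.choose_spec (hins K a b hv.1 hv.2)).1
      · rw [dif_neg hv]
        exact isSupermart_const hQ 1
  have hCs2 : ∀ i s, 0 ≤ Cs i s := by
    intro i s
    rw [hCsdef]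
    rcases hdi : Encodable.decode (α := ℕ × ℚ × ℚ) i with - | ⟨K, a, b⟩
    · simp only [hdi, Option.elim]
      norm_num
    · simp only [hdi, Option.elim]
      by_cases hv : C < ((a : ℚ) : ℝ) ∧ ((a : ℚ) : ℝ) < ((b : ℚ) : ℝ)
      · rw [dif_pos hv]
        exact (Classical.choose_spec (hins K a b hv.1 hv.2)).2.1 s
      · rw [dif_neg hv]
        norm_num
  have hCs3 : ∀ i, Cs i [] ≤ 1 := by
    intro i
    rw [hCsdef]
    rcases hdi : Encodable.decode (α := ℕ × ℚ × ℚ) i with - | ⟨K, a, b⟩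
    · simp only [hdi, Option.elim]
      exact le_refl 1
    · simp only [hdi, Option.elim]
      by_cases hv : C < ((a : ℚ) : ℝ) ∧ ((a : ℚ) : ℝ) < ((b : ℚ) : ℝ)
      · rw [dif_pos hv]
        exact le_of_eq (Classical.choose_spec (hins K a b hv.1 hv.2)).2.2.1
      · rw [dif_neg hv]
  obtain ⟨J, hJsup, hJnn, hJinit, hJbound⟩ := combine_insurance hQ Cs hCs1 hCs2 hCs3 hε
  -- the final witness
  set T : List X → ℝ := fun s => T' s + J s with hTdef
  have hTsup : IsSupermart Q T := isSupermart_add hQ hT'sup hJsup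
  have hTlb : ∀ s, C ≤ T s := by
    intro s
    have h1 := hT'C s
    have h2 := hJnn s
    show C ≤ T' s + J s
    linarith
  -- domination of f on all paths
  have hTdom : ∀ ω : ℕ → X, pref ω (List.length ([] : List X)) = [] →
      f ω ≤ Filter.liminf (fun n => ((T (pref ω n) : ℝ) : EReal)) Filter.atTop := by
    intro ω _
    by_cases hgood : ∀ K : ℕ,
        g K ω ≤ Filter.liminf (fun n => ((V K (pref ω n) : ℝ) : EReal)) Filter.atTop
    · rw [hfsup ω]
      apply iSup_le
      intro K
      refine le_trans (hgood K) ?_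
      refine Filter.liminf_le_liminf (Filter.Eventually.of_forall ?_) (by isBoundedDefault)
        (by isBoundedDefault)
      intro n
      have h3 : V K (pref ω n) ≤ T (pref ω n) := by
        have h4 := hT'V K (pref ω n)
        have h5 := hJnn (pref ω n)
        show V K (pref ω n) ≤ T' (pref ω n) + J (pref ω n)
        linarith
      exact_mod_cast h3
    · push_neg at hgood
      obtain ⟨K, hbad⟩ := hgood
      obtain ⟨a, ha1, ha2⟩ := EReal.exists_rat_btwn_of_lt hbad
      obtain ⟨b, hb1, hb2⟩ := EReal.exists_rat_btwn_of_lt ha2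
      have hCa : C < (a : ℝ) := by
        have h6 : (C : EReal) ≤
            Filter.liminf (fun n => ((V K (pref ω n) : ℝ) : EReal)) Filter.atTop := by
          refine Filter.le_liminf_of_le (by isBoundedDefault) ?_
          apply Filter.Eventually.of_forall
          intro n
          exact_mod_cast hVC K (pref ω n)
        have h7 := lt_of_le_of_lt h6 ha1
        exact_mod_cast h7
      have hab : (a : ℝ) < (b : ℝ) := by exact_mod_cast hb1
      have hv : C < (a : ℝ) ∧ (a : ℝ) < (b : ℝ) := ⟨hCa, hab⟩
      set i0 : ℕ := Encodable.encode ((K, a, b) : ℕ × ℚ × ℚ) with hi0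
      have hCseq : Cs i0 = Classical.choose (hins K a b hv.1 hv.2) := by
        rw [hCsdef]
        have hdec0 : Encodable.decode (α := ℕ × ℚ × ℚ) i0 = some (K, a, b) :=
          Encodable.encodek _
        simp only [hdec0, Option.elim]
        rw [dif_pos hv]
      have hspec := Classical.choose_spec (hins K a b hv.1 hv.2)
      have hgrow := hspec.2.2.2 ω ha1 hb2
      have hliminf : ∀ z : ℝ, ((z : ℝ) : EReal) ≤
          Filter.liminf (fun n => ((T (pref ω n) : ℝ) : EReal)) Filter.atTop := by
        intro z
        obtain ⟨l, hl0, hlB⟩ := hJbound i0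
        refine Filter.le_liminf_of_le (by isBoundedDefault) ?_
        filter_upwards [hgrow ((z - C) / l)] with n hn
        have h8 : z ≤ T (pref ω n) := by
          have h9 : l * Cs i0 (pref ω n) ≤ J (pref ω n) := hlB _
          rw [hCseq] at h9
          have h10 : l * ((z - C) / l) ≤ l * Classical.choose (hins K a b hv.1 hv.2) (pref ω n) :=
            mul_le_mul_of_nonneg_left hn (le_of_lt hl0)
          have h11 : l * ((z - C) / l) = z - C := by field_simp
          have h12 := hT'C (pref ω n)
          show z ≤ T' (pref ω n) + J (pref ω n)
          linarith
        exact_mod_cast h8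
      by_contra hcon2
      rw [not_le] at hcon2
      have h13 : Filter.liminf (fun n => ((T (pref ω n) : ℝ) : EReal)) Filter.atTop < ⊤ :=
        lt_of_lt_of_le hcon2 le_top
      obtain ⟨z, hz1, -⟩ := EReal.exists_between_coe_real h13
      exact absurd (lt_of_le_of_lt (hliminf z) hz1) (lt_irrefl _)
  -- conclude
  have hmem : ((T [] : ℝ) : EReal) ∈ EVSet Q f [] := ⟨T, hTsup, ⟨C, hTlb⟩, hTdom, rfl⟩
  have h1 : EV Q f [] ≤ ((T [] : ℝ) : EReal) := by
    rw [EV_eq_sInf]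
    exact sInf_le hmem
  have h2 : T [] ≤ Lr + ε := by
    have h3 : T [] = T' [] + J [] := rfl
    rw [h3]
    linarith [hT'Lr, hJinit]
  calc EV Q f [] ≤ ((T [] : ℝ) : EReal) := h1
    _ ≤ (((Lr + ε : ℝ)) : EReal) := by exact_mod_cast h2
    _ = L + (ε : EReal) := by rw [EReal.coe_add, hLrL]
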